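/- arXiv:2203.02111 — 2 statements merged into one kernel-verified Lean document; each statement's English description precedes it below -/
import Mathlib

section
/- Consider the two-layer drive-response networked sampled-data system with state matrix Φ_s = [[Φ^{1,1}, 0], [Φ^{2,1}, Φ^{2,2}]] and input matrix Ψ_s = diag(Ψ^{1,1}, Ψ^{2,2}), and assume 0 is not an eigenvalue of Φ_s (i.e., Φ_s is invertible). Then the discrete-time system x(k+1) = Φ_s x(k) + Ψ_s u(k) is controllable if and only if both of the following hold: (1) for every θ ∈ ℂ and every nonzero row vector η ∈ ℂ^{1×Nn} with η Φ^{1,1} = θ η, one has η Ψ^{1,1} ≠ 0; and (2) for every θ ∈ ℂ, every nonzero η ∈ ℂ^{1×Nn} with η Φ^{2,2} = θ η, and every ξ ∈ ℂ^{1×Nn} with ξ(θ I_{Nn} − Φ^{1,1}) = η Φ^{2,1}, the concatenated row vector [ξ Ψ^{1,1}, η Ψ^{2,2}] is nonzero. -/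
open Matrix
open scoped Kronecker

/-- Matrix exponential of a real square matrix. -/
noncomputable def matExp {k : Type*} [Fintype k] [DecidableEq k]
    (A : Matrix k k ℝ) : Matrix k k ℝ := NormedSpace.exp A

/-- Entrywise integral `∫₀ʰ e^{Aτ} dτ`. -/
noncomputable def intExp {k : Type*} [Fintype k] [DecidableEq k]
    (A : Matrix k k ℝ) (h : ℝ) : Matrix k k ℝ :=
  Matrix.of fun i j => ∫ τ in (0:ℝ)..h, matExp (τ • A) i j

/-- A real matrix regarded as a complex matrix entrywise. -/
def cmap {a b : Type*} (M : Matrix a b ℝ) : Matrix a b ℂ := M.map Complex.ofReal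

/-- `θ` is a (complex) eigenvalue of the complex matrix `M`. -/
def IsEig {k : Type*} [Fintype k] (M : Matrix k k ℂ) (θ : ℂ) : Prop :=
  ∃ v : k → ℂ, v ≠ 0 ∧ M.mulVec v = θ • v

/-- Controllability of the discrete-time linear system `x(k+1) = F x(k) + G u(k)`:
every target state can be reached from every initial state in finite time. -/
def Controllable {q r : Type*} [Fintype q] [Fintype r]
    (F : Matrix q q ℝ) (G : Matrix q r ℝ) : Prop :=
  ∀ x₀ xf : q → ℝ, ∃ (T : ℕ) (u : ℕ → r → ℝ) (x : ℕ → q → ℝ),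
    x 0 = x₀ ∧ (∀ k, x (k + 1) = F.mulVec (x k) + G.mulVec (u k)) ∧ x T = xf

/-! ### Auxiliary material: casting real vectors/matrices to `ℂ` -/

/-- A real vector regarded as a complex vector entrywise. -/
def castv {α : Type*} (v : α → ℝ) : α → ℂ := fun i => (v i : ℂ)

lemma castv_eq_zero {α : Type*} {v : α → ℝ} : castv v = 0 ↔ v = 0 := by
  constructor
  · intro h; funext i; have := congrFun h i
    simpa [castv] using this
  · rintro rfl; funext i; simp [castv]

lemma castv_mulVec {a b : Type*} [Fintype b] (M : Matrix a b ℝ) (v : b → ℝ) :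
    castv (M *ᵥ v) = cmap M *ᵥ castv v := by
  funext i
  simp only [castv, cmap, Matrix.mulVec, dotProduct, Matrix.map_apply]
  push_cast
  rfl

lemma castv_vecMul {a b : Type*} [Fintype a] (M : Matrix a b ℝ) (v : a → ℝ) :
    castv (v ᵥ* M) = castv v ᵥ* cmap M := by
  funext i
  simp only [castv, cmap, Matrix.vecMul, dotProduct, Matrix.map_apply]
  push_cast
  rfl

lemma castv_sum {α β : Type*} (s : Finset β) (f : β → α → ℝ) :
    castv (∑ j ∈ s, f j) = ∑ j ∈ s, castv (f j) := by
  funext i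
  simp [castv]

lemma cmap_mul {a b c : Type*} [Fintype b] (A : Matrix a b ℝ) (B : Matrix b c ℝ) :
    cmap (A * B) = cmap A * cmap B := by
  ext i j
  simp [cmap, Matrix.mul_apply]

lemma cmap_one {a : Type*} [Fintype a] [DecidableEq a] :
    cmap (1 : Matrix a a ℝ) = 1 := by
  ext i j
  simp [cmap, Matrix.one_apply, apply_ite Complex.ofReal]

lemma cmap_pow {a : Type*} [Fintype a] [DecidableEq a] (F : Matrix a a ℝ) (j : ℕ) :
    cmap (F ^ j) = cmap F ^ j := by
  induction j with
  | zero => simpa using cmap_one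
  | succ j ih => rw [pow_succ, pow_succ, cmap_mul, ih]

/-! ### The reachability subspaces -/

set_option linter.unusedSectionVars false

section Reach
variable {q r : Type*} [Fintype q] [Fintype r] [DecidableEq q] [DecidableEq r]

/-- States reachable from the origin in `T` steps, as a linear map of inputs. -/
noncomputable def reachL (F : Matrix q q ℝ) (G : Matrix q r ℝ) (T : ℕ) :
    (ℕ → r → ℝ) →ₗ[ℝ] (q → ℝ) :=
  ∑ j ∈ Finset.range T, ((F ^ j * G).mulVecLin).comp (LinearMap.proj j)

lemma reachL_apply (F : Matrix q q ℝ) (G : Matrix q r ℝ) (T : ℕ) (u : ℕ → r → ℝ) :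
    reachL F G T u = ∑ j ∈ Finset.range T, (F ^ j * G) *ᵥ (u j) := by
  simp [reachL]

/-- The subspace of states reachable from the origin in `T` steps. -/
noncomputable def reachSub (F : Matrix q q ℝ) (G : Matrix q r ℝ) (T : ℕ) :
    Submodule ℝ (q → ℝ) := LinearMap.range (reachL F G T)

lemma reachSub_mono (F : Matrix q q ℝ) (G : Matrix q r ℝ) :
    Monotone (reachSub F G) := by
  intro T T' hTT'
  rintro y ⟨u, rfl⟩
  refine ⟨fun j => if j < T then u j else 0, ?_⟩
  rw [reachL_apply, reachL_apply]
  rw [← Finset.sum_subset (Finset.range_subset_range.mpr hTT')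
    (fun j _ hj => by rw [if_neg (by simpa using hj), Matrix.mulVec_zero])]
  exact Finset.sum_congr rfl fun j hj => by rw [if_pos (Finset.mem_range.mp hj)]

lemma traj_formula (F : Matrix q q ℝ) (G : Matrix q r ℝ) (u : ℕ → r → ℝ)
    (x : ℕ → q → ℝ) (x₀ : q → ℝ) (h0 : x 0 = x₀)
    (hrec : ∀ k, x (k + 1) = F *ᵥ (x k) + G *ᵥ (u k)) :
    ∀ k, x k = (F ^ k) *ᵥ x₀ + ∑ j ∈ Finset.range k, (F ^ (k - 1 - j) * G) *ᵥ u j := by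
  intro k
  induction k with
  | zero => simp [h0]
  | succ k ih =>
    rw [hrec k, ih]
    have hsum := map_sum (F.mulVecLin)
      (fun j => (F ^ (k - 1 - j) * G) *ᵥ u j) (Finset.range k)
    simp only [Matrix.mulVecLin_apply] at hsum
    rw [Matrix.mulVec_add, hsum, Matrix.mulVec_mulVec]
    have h1 : F * F ^ k = F ^ (k + 1) := (pow_succ' F k).symm
    have h2 : ∀ j ∈ Finset.range k,
        F *ᵥ ((F ^ (k - 1 - j) * G) *ᵥ u j) = (F ^ (k - j) * G) *ᵥ u j := by
      intro j hj
      have hjk := Finset.mem_range.mp hj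
      rw [Matrix.mulVec_mulVec, ← Matrix.mul_assoc, ← pow_succ' F (k - 1 - j),
        show k - 1 - j + 1 = k - j by omega]
    rw [Finset.sum_congr rfl h2, h1]
    have h3 : ∑ j ∈ Finset.range (k + 1), (F ^ (k + 1 - 1 - j) * G) *ᵥ u j
        = (∑ j ∈ Finset.range k, (F ^ (k - j) * G) *ᵥ u j) + G *ᵥ u k := by
      have h4 : ∀ j, k + 1 - 1 - j = k - j := fun j => by omega
      simp only [h4]
      rw [Finset.sum_range_succ, Nat.sub_self, pow_zero, Matrix.one_mul]
    rw [h3, add_assoc]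

lemma reflect_sum (F : Matrix q q ℝ) (G : Matrix q r ℝ) (T : ℕ) (u : ℕ → r → ℝ) :
    ∑ j ∈ Finset.range T, (F ^ (T - 1 - j) * G) *ᵥ u j
      = ∑ j ∈ Finset.range T, (F ^ j * G) *ᵥ u (T - 1 - j) := by
  rw [← Finset.sum_range_reflect (fun j => (F ^ j * G) *ᵥ u (T - 1 - j)) T]
  refine Finset.sum_congr rfl fun j hj => ?_
  have : T - 1 - (T - 1 - j) = j := by
    have := Finset.mem_range.mp hj; omega
  rw [this]

lemma dotProduct_sum' {α β : Type*} [Fintype α] (v : α → ℂ) (s : Finset β)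
    (f : β → α → ℂ) : v ⬝ᵥ (∑ j ∈ s, f j) = ∑ j ∈ s, v ⬝ᵥ f j := by
  simp only [dotProduct, Finset.sum_apply, Finset.mul_sum]
  exact Finset.sum_comm

lemma pi_eq_sum_single (y : q → ℝ) :
    y = ∑ i : q, (y i) • (Pi.single i (1 : ℝ) : q → ℝ) := by
  have h1 : ∀ i : q, (y i) • (Pi.single i (1 : ℝ) : q → ℝ) = Pi.single i (y i) := by
    intro i
    funext j
    by_cases hji : j = i <;> simp [Pi.single_apply, hji]
  simp only [h1]
  exact (Finset.univ_sum_single y).symm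

lemma exists_reachSub_top (F : Matrix q q ℝ) (G : Matrix q r ℝ)
    (hp : (⨆ T, reachSub F G T) = ⊤) : ∃ T, reachSub F G T = ⊤ := by
  have hmem : ∀ i : q, ∃ T, Pi.single i (1 : ℝ) ∈ reachSub F G T := by
    intro i
    have h1 : Pi.single i (1 : ℝ) ∈ (⨆ T, reachSub F G T) := hp ▸ Submodule.mem_top
    exact (Submodule.mem_iSup_of_chain ⟨reachSub F G, reachSub_mono F G⟩ _).mp h1
  choose Ts hTs using hmem
  refine ⟨Finset.univ.sup Ts, ?_⟩
  rw [eq_top_iff]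
  intro y _
  rw [pi_eq_sum_single y]
  refine Submodule.sum_mem _ fun i _ => Submodule.smul_mem _ _ ?_
  exact reachSub_mono F G (Finset.le_sup (Finset.mem_univ i)) (hTs i)

lemma controllable_iff_top (F : Matrix q q ℝ) (G : Matrix q r ℝ) :
    Controllable F G ↔ (⨆ T, reachSub F G T) = ⊤ := by
  constructor
  · intro hC
    rw [eq_top_iff]
    intro y _
    obtain ⟨T, u, x, h0, hrec, hT⟩ := hC 0 y
    have hx := traj_formula F G u x 0 h0 hrec T
    rw [hT] at hx
    have hy : y ∈ reachSub F G T := by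
      refine ⟨fun j => u (T - 1 - j), ?_⟩
      rw [reachL_apply, ← reflect_sum, hx]
      simp
    exact le_iSup (reachSub F G) T hy
  · intro hp
    obtain ⟨T, hT⟩ := exists_reachSub_top F G hp
    intro x₀ xf
    have hmem : xf - (F ^ T) *ᵥ x₀ ∈ reachSub F G T := hT ▸ Submodule.mem_top
    obtain ⟨u', hu'⟩ := hmem
    rw [reachL_apply] at hu'
    set u : ℕ → r → ℝ := fun k => u' (T - 1 - k) with hu
    set x : ℕ → q → ℝ := fun k => Nat.rec x₀ (fun k xk => F *ᵥ xk + G *ᵥ u k) k with hxdef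
    refine ⟨T, u, x, rfl, fun k => rfl, ?_⟩
    rw [traj_formula F G u x x₀ rfl (fun k => rfl) T, reflect_sum]
    have hsum : ∑ j ∈ Finset.range T, (F ^ j * G) *ᵥ u (T - 1 - j)
        = ∑ j ∈ Finset.range T, (F ^ j * G) *ᵥ u' j := by
      refine Finset.sum_congr rfl fun j hj => ?_
      have hjT := Finset.mem_range.mp hj
      show (F ^ j * G) *ᵥ u' (T - 1 - (T - 1 - j)) = (F ^ j * G) *ᵥ u' j
      rw [show T - 1 - (T - 1 - j) = j by omega]
    rw [hsum, hu']
    abel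

/-! ### The PBH eigenvector test -/

lemma top_iff_PBH (F : Matrix q q ℝ) (G : Matrix q r ℝ) :
    (⨆ T, reachSub F G T) = ⊤ ↔
      ∀ (θ : ℂ) (η : q → ℂ), η ≠ 0 → η ᵥ* cmap F = θ • η → η ᵥ* cmap G ≠ 0 := by
  constructor
  · intro hp θ η hη heig hG0
    apply hη
    have hpow : ∀ j : ℕ, η ᵥ* (cmap F ^ j) = θ ^ j • η := by
      intro j
      induction j with
      | zero => simp [Matrix.vecMul_one]
      | succ j ih =>
        rw [pow_succ, ← Matrix.vecMul_vecMul, ih, Matrix.smul_vecMul, heig,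
          smul_smul, ← pow_succ]
    have hzero : ∀ j : ℕ, η ᵥ* (cmap F ^ j * cmap G) = 0 := by
      intro j
      rw [← Matrix.vecMul_vecMul, hpow, Matrix.smul_vecMul, hG0, smul_zero]
    funext i
    have h1 : Pi.single i (1 : ℝ) ∈ (⨆ T, reachSub F G T) := hp ▸ Submodule.mem_top
    obtain ⟨T, hT⟩ :=
      (Submodule.mem_iSup_of_chain ⟨reachSub F G, reachSub_mono F G⟩ _).mp h1
    obtain ⟨u, hu⟩ := hT
    rw [reachL_apply] at hu
    have h2 : η ⬝ᵥ castv (∑ j ∈ Finset.range T, (F ^ j * G) *ᵥ u j) = 0 := by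
      rw [castv_sum, dotProduct_sum']
      refine Finset.sum_eq_zero fun j _ => ?_
      rw [castv_mulVec, Matrix.dotProduct_mulVec, cmap_mul, cmap_pow, hzero j,
        zero_dotProduct]
    rw [hu] at h2
    have h3 : η ⬝ᵥ castv (Pi.single i (1 : ℝ)) = η i := by
      simp [castv, dotProduct, Pi.single_apply, apply_ite Complex.ofReal]
    rw [h3] at h2
    exact h2
  · intro hPBH
    by_contra hne
    have hlt : (⨆ T, reachSub F G T) < ⊤ := lt_top_iff_ne_top.mpr hne
    obtain ⟨f, hf0, hfbot⟩ :=
      Submodule.exists_dual_map_eq_bot_of_lt_top hlt inferInstance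
    set w : q → ℝ := fun i => f (Pi.single i 1) with hw
    have hfy : ∀ y : q → ℝ, f y = w ⬝ᵥ y := by
      intro y
      conv_lhs => rw [pi_eq_sum_single y]
      rw [map_sum]
      simp [dotProduct, hw, mul_comm]
    have hfp : ∀ v ∈ (⨆ T, reachSub F G T), f v = 0 := by
      intro v hv
      have h1 : f v ∈ Submodule.map f (⨆ T, reachSub F G T) :=
        Submodule.mem_map_of_mem hv
      rw [hfbot] at h1
      simpa using h1
    have hw0 : w ≠ 0 := by
      intro h0
      apply hf0
      apply LinearMap.ext
      intro y
      simp [hfy, h0]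
    have hwFG : ∀ j : ℕ, w ᵥ* (F ^ j * G) = 0 := by
      intro j
      funext c
      have hcol : (F ^ j * G) *ᵥ Pi.single c 1 ∈ ⨆ T, reachSub F G T := by
        apply le_iSup (reachSub F G) (j + 1)
        refine ⟨fun k => if k = j then Pi.single c 1 else 0, ?_⟩
        rw [reachL_apply, Finset.sum_eq_single j]
        · rw [if_pos rfl]
        · intro k _ hkj
          rw [if_neg hkj, Matrix.mulVec_zero]
        · intro hj
          exact absurd (Finset.self_mem_range_succ j) hj
      have h1 := hfp _ hcol
      rw [hfy, Matrix.dotProduct_mulVec, dotProduct_single, mul_one] at h1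
      simpa using h1
    set U : Submodule ℂ (q → ℂ) :=
      { carrier := {η | ∀ j : ℕ, η ᵥ* (cmap F ^ j * cmap G) = 0}
        add_mem' := fun ha hb j => by
          rw [Matrix.add_vecMul, ha j, hb j, add_zero]
        zero_mem' := fun j => Matrix.zero_vecMul _
        smul_mem' := fun c a ha j => by
          rw [Matrix.smul_vecMul, ha j, smul_zero] } with hU
    have hmemU : ∀ η : q → ℂ,
        (η ∈ U ↔ ∀ j : ℕ, η ᵥ* (cmap F ^ j * cmap G) = 0) := fun η => Iff.rfl
    have hwU : castv w ∈ U := by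
      rw [hmemU]
      intro j
      rw [← cmap_pow, ← cmap_mul, ← castv_vecMul, hwFG j]
      exact castv_eq_zero.mpr rfl
    have hwne : (⟨castv w, hwU⟩ : U) ≠ 0 := by
      intro hzz
      exact hw0 (castv_eq_zero.mp (congrArg Subtype.val hzz))
    haveI : Nontrivial U := nontrivial_of_ne _ 0 hwne
    set e : U →ₗ[ℂ] U :=
      { toFun := fun η => ⟨(η : q → ℂ) ᵥ* cmap F, by
          rw [hmemU]
          intro j
          rw [Matrix.vecMul_vecMul, ← Matrix.mul_assoc, ← pow_succ']
          exact (hmemU η).mp η.2 (j + 1)⟩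
        map_add' := fun a b => Subtype.ext (by
          simp [Matrix.add_vecMul])
        map_smul' := fun c a => Subtype.ext (by
          simp [Matrix.smul_vecMul]) } with he
    obtain ⟨θ, hθ⟩ := Module.End.exists_eigenvalue e
    obtain ⟨v, hv⟩ := hθ.exists_hasEigenvector
    have hv1 : (v : q → ℂ) ᵥ* cmap F = θ • (v : q → ℂ) := by
      have h1 := Module.End.mem_eigenspace_iff.mp hv.1
      exact congrArg Subtype.val h1
    have hvne : (v : q → ℂ) ≠ 0 := fun h => hv.2 (Subtype.ext h)
    have hvG : (v : q → ℂ) ᵥ* cmap G = 0 := by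
      have h1 := (hmemU (v : q → ℂ)).mp v.2 0
      rwa [pow_zero, Matrix.one_mul] at h1
    exact hPBH θ (v : q → ℂ) hvne hv1 hvG

/-- The PBH test characterizes controllability. -/
theorem controllable_iff_PBH (F : Matrix q q ℝ) (G : Matrix q r ℝ) :
    Controllable F G ↔
      ∀ (θ : ℂ) (η : q → ℂ), η ≠ 0 → η ᵥ* cmap F = θ • η → η ᵥ* cmap G ≠ 0 := by
  rw [controllable_iff_top, top_iff_PBH]

end Reach

/-! ### Block-matrix helpers -/

lemma smul_sum_elim {α β : Type*} (θ : ℂ) (a : α → ℂ) (b : β → ℂ) :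
    θ • Sum.elim a b = Sum.elim (θ • a) (θ • b) := by
  funext i
  cases i <;> simp

lemma sum_elim_eq_zero_iff {α β : Type*} {a : α → ℂ} {b : β → ℂ} :
    Sum.elim a b = 0 ↔ a = 0 ∧ b = 0 := by
  constructor
  · intro h
    exact ⟨funext fun i => congrFun h (Sum.inl i), funext fun i => congrFun h (Sum.inr i)⟩
  · rintro ⟨rfl, rfl⟩
    funext i
    cases i <;> rfl

lemma vecMul_smul_one {a : Type*} [Fintype a] [DecidableEq a] (θ : ℂ) (v : a → ℂ) :
    v ᵥ* (θ • (1 : Matrix a a ℂ)) = θ • v := by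
  have hd : (θ • (1 : Matrix a a ℂ)) = Matrix.diagonal (fun _ => θ) := by
    ext i j
    by_cases hij : i = j <;> simp [Matrix.one_apply, Matrix.diagonal_apply, hij]
  rw [hd]
  funext i
  rw [Matrix.vecMul_diagonal]
  simp [mul_comm]

lemma cmap_fromBlocks {a b c d : Type*} (A : Matrix a c ℝ) (B : Matrix a d ℝ)
    (C : Matrix b c ℝ) (D : Matrix b d ℝ) :
    cmap (Matrix.fromBlocks A B C D) = Matrix.fromBlocks (cmap A) (cmap B) (cmap C) (cmap D) := by
  unfold cmap
  rw [Matrix.fromBlocks_map]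

lemma cmap_zero {a b : Type*} : cmap (0 : Matrix a b ℝ) = 0 := by
  ext i j
  simp [cmap]

/-- when `Φ_s` is nonsingular, the two conditions of Theorem 2 are
necessary and sufficient for controllability of the two-layer drive-response
networked sampled-data system. -/
theorem twoLayer_driveResponse_controllable_iff
    (N n m p : ℕ)
    (A1 A2 : Matrix (Fin n) (Fin n) ℝ) (B1 B2 : Matrix (Fin n) (Fin p) ℝ)
    (C1 C2 : Matrix (Fin m) (Fin n) ℝ) (H1 H2 : Matrix (Fin n) (Fin m) ℝ)
    (W1 W2 : Matrix (Fin N) (Fin N) ℝ) (Δ1 Δ2 : Matrix (Fin N) (Fin N) ℝ)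
    (hΔ1d : Δ1.IsDiag) (hΔ2d : Δ2.IsDiag)
    (hΔ1v : ∀ i, Δ1 i i = 0 ∨ Δ1 i i = 1) (hΔ2v : ∀ i, Δ2 i i = 0 ∨ Δ2 i i = 1)
    (D21 : Matrix (Fin N) (Fin N) ℝ) (P21 : Matrix (Fin n) (Fin m) ℝ)
    (h : ℝ) (hh : 0 < h)
    (Φ11 Φ22 Φ21 : Matrix (Fin N × Fin n) (Fin N × Fin n) ℝ)
    (Ψ11 Ψ22 : Matrix (Fin N × Fin n) (Fin N × Fin p) ℝ)
    (hΦ11 : Φ11 = (1 : Matrix (Fin N) (Fin N) ℝ) ⊗ₖ matExp (h • A1)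
        + W1 ⊗ₖ (intExp A1 h * H1 * C1))
    (hΦ22 : Φ22 = (1 : Matrix (Fin N) (Fin N) ℝ) ⊗ₖ matExp (h • A2)
        + W2 ⊗ₖ (intExp A2 h * H2 * C2))
    (hΦ21 : Φ21 = D21 ⊗ₖ (intExp A2 h * P21 * C1))
    (hΨ11 : Ψ11 = Δ1 ⊗ₖ (intExp A1 h * B1))
    (hΨ22 : Ψ22 = Δ2 ⊗ₖ (intExp A2 h * B2))
    -- 0 is not an eigenvalue of Φ_s, i.e. Φ_s is invertible
    (hns : ¬ IsEig (cmap (Matrix.fromBlocks Φ11 0 Φ21 Φ22)) 0) :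
    Controllable (Matrix.fromBlocks Φ11 0 Φ21 Φ22) (Matrix.fromBlocks Ψ11 0 0 Ψ22) ↔
      ((∀ (θ : ℂ) (η : Fin N × Fin n → ℂ), η ≠ 0 →
          η ᵥ* cmap Φ11 = θ • η → η ᵥ* cmap Ψ11 ≠ 0) ∧
       (∀ (θ : ℂ) (η ξ : Fin N × Fin n → ℂ), η ≠ 0 →
          η ᵥ* cmap Φ22 = θ • η →
          ξ ᵥ* (θ • (1 : Matrix (Fin N × Fin n) (Fin N × Fin n) ℂ) - cmap Φ11)
            = η ᵥ* cmap Φ21 →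
          Sum.elim (ξ ᵥ* cmap Ψ11) (η ᵥ* cmap Ψ22) ≠ 0)) := by
  clear hns hΦ11 hΦ22 hΦ21 hΨ11 hΨ22 hΔ1d hΔ2d hΔ1v hΔ2v hh
  rw [controllable_iff_PBH]
  have hcF : cmap (Matrix.fromBlocks Φ11 0 Φ21 Φ22)
      = Matrix.fromBlocks (cmap Φ11) 0 (cmap Φ21) (cmap Φ22) := by
    rw [cmap_fromBlocks, cmap_zero]
  have hcG : cmap (Matrix.fromBlocks Ψ11 0 0 Ψ22)
      = Matrix.fromBlocks (cmap Ψ11) 0 0 (cmap Ψ22) := by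
    rw [cmap_fromBlocks, cmap_zero]
  constructor
  · intro hPBH
    constructor
    · -- condition (1)
      intro θ η hη heig hG0
      have hwne : (Sum.elim η 0 : (Fin N × Fin n) ⊕ (Fin N × Fin n) → ℂ) ≠ 0 := by
        intro hz
        exact hη (sum_elim_eq_zero_iff.mp hz).1
      have heigw : Sum.elim η (0 : Fin N × Fin n → ℂ)
          ᵥ* cmap (Matrix.fromBlocks Φ11 0 Φ21 Φ22)
          = θ • Sum.elim η (0 : Fin N × Fin n → ℂ) := by
        rw [hcF, Matrix.vecMul_fromBlocks, smul_sum_elim]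
        simp [heig, Matrix.zero_vecMul, Matrix.vecMul_zero]
      have hGz : Sum.elim η (0 : Fin N × Fin n → ℂ)
          ᵥ* cmap (Matrix.fromBlocks Ψ11 0 0 Ψ22) = 0 := by
        rw [hcG, Matrix.vecMul_fromBlocks]
        simp [hG0, Matrix.zero_vecMul, Matrix.vecMul_zero]
      exact hPBH θ _ hwne heigw hGz
    · -- condition (2)
      intro θ η ξ hη heig hξ hz
      rw [Matrix.vecMul_sub, vecMul_smul_one] at hξ
      have hξ' : ξ ᵥ* cmap Φ11 + η ᵥ* cmap Φ21 = θ • ξ := by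
        rw [← hξ]; abel
      have hwne : (Sum.elim ξ η : (Fin N × Fin n) ⊕ (Fin N × Fin n) → ℂ) ≠ 0 := by
        intro hzz
        exact hη (sum_elim_eq_zero_iff.mp hzz).2
      have heigw : Sum.elim ξ η ᵥ* cmap (Matrix.fromBlocks Φ11 0 Φ21 Φ22)
          = θ • Sum.elim ξ η := by
        rw [hcF, Matrix.vecMul_fromBlocks, smul_sum_elim]
        simp [heig, hξ', Matrix.vecMul_zero]
      have hGz : Sum.elim ξ η ᵥ* cmap (Matrix.fromBlocks Ψ11 0 0 Ψ22) = 0 := by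
        rw [hcG, Matrix.vecMul_fromBlocks]
        have h1 := sum_elim_eq_zero_iff.mp hz
        simp [h1.1, h1.2, Matrix.zero_vecMul, Matrix.vecMul_zero]
      exact hPBH θ _ hwne heigw hGz
  · rintro ⟨h1, h2⟩ θ w hw heig hG0
    set ξ : Fin N × Fin n → ℂ := w ∘ Sum.inl with hξdef
    set η : Fin N × Fin n → ℂ := w ∘ Sum.inr with hηdef
    have hwelim : w = Sum.elim ξ η := by
      funext i
      cases i <;> rfl
    rw [hwelim, hcF, Matrix.vecMul_fromBlocks, smul_sum_elim] at heig
    have heig1 : ξ ᵥ* cmap Φ11 + η ᵥ* cmap Φ21 = θ • ξ := by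
      have := congrFun heig
      exact funext fun i => by simpa using this (Sum.inl i)
    have heig2 : η ᵥ* cmap Φ22 = θ • η := by
      have := congrFun heig
      have h3 : ξ ᵥ* (0 : Matrix (Fin N × Fin n) (Fin N × Fin n) ℂ)
          + η ᵥ* cmap Φ22 = θ • η := funext fun i => by simpa using this (Sum.inr i)
      rwa [Matrix.vecMul_zero, zero_add] at h3
    rw [hwelim, hcG, Matrix.vecMul_fromBlocks] at hG0
    simp only [Matrix.vecMul_zero, Matrix.zero_vecMul, add_zero, zero_add,
      Sum.elim_comp_inl, Sum.elim_comp_inr] at hG0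
    by_cases hηz : η = 0
    · have hξz : ξ ≠ 0 := by
        intro hz
        apply hw
        rw [hwelim, hz, hηz]
        exact sum_elim_eq_zero_iff.mpr ⟨rfl, rfl⟩
      have heigξ : ξ ᵥ* cmap Φ11 = θ • ξ := by
        rw [← heig1, hηz, Matrix.zero_vecMul, add_zero]
      have := h1 θ ξ hξz heigξ
      apply this
      have h4 := sum_elim_eq_zero_iff.mp hG0
      exact h4.1
    · have hξeq : ξ ᵥ* (θ • (1 : Matrix (Fin N × Fin n) (Fin N × Fin n) ℂ) - cmap Φ11)
          = η ᵥ* cmap Φ21 := by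
        rw [Matrix.vecMul_sub, vecMul_smul_one, ← heig1]
        abel
      exact h2 θ η ξ hηz heig2 hξeq hG0
end

section
/- Consider the two-layer drive-response networked sampled-data system under the Slow Inter-layer multi-rate sampling pattern with integer l ≥ 1: define the lifted matrices Φ̃^{1,1} = (Φ^{1,1})^l, Φ̃^{2,2} = (Φ^{2,2})^l, Φ̃^{2,1} = (Σ_{r=0}^{l−1} (Φ^{2,2})^r)·Φ^{2,1}, Ψ̃^{1,1} = [(Φ^{1,1})^{l−1} Ψ^{1,1}, …, Φ^{1,1} Ψ^{1,1}, Ψ^{1,1}], Ψ̃^{2,2} = [(Φ^{2,2})^{l−1} Ψ^{2,2}, …, Φ^{2,2} Ψ^{2,2}, Ψ^{2,2}], Φ̃_s = [[Φ̃^{1,1}, 0], [Φ̃^{2,1}, Φ̃^{2,2}]], Ψ̃_s = diag(Ψ̃^{1,1}, Ψ̃^{2,2}). Suppose: (1) for every μ ∈ ℂ and every nonzero row vector η ∈ ℂ^{1×Nn} with η (Φ^{1,1})^l = μ η, one has η(Δ^1 ⊗ 𝓑^1(h)) ≠ 0; and (2) for every μ ∈ ℂ, every nonzero η ∈ ℂ^{1×Nn}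 with η (Φ^{2,2})^l = μ η, and every ξ ∈ ℂ^{1×Nn} with ξ(μ I_{Nn} − (Φ^{1,1})^l) = η Φ̃^{2,1}, the concatenated row vector [ξ Ψ̃^{1,1}, η(Δ^2 ⊗ 𝓑^2(h))] is nonzero. Then the discrete-time system x(k+1) = Φ̃_s x(k) + Ψ̃_s u(k) is controllable. -/
open Matrix
open scoped Kronecker

set_option maxHeartbeats 1000000

section Auxiliary

/-- If a submodule of `q → ℝ` is proper, some nonzero vector is `⬝ᵥ`-orthogonal to it. -/
lemma exists_dot_ann {q : Type*} [Fintype q] [DecidableEq q]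
    (V : Submodule ℝ (q → ℝ)) (hV : V ≠ ⊤) :
    ∃ w : q → ℝ, w ≠ 0 ∧ ∀ v ∈ V, w ⬝ᵥ v = 0 := by
  obtain ⟨x, hx⟩ : ∃ x : q → ℝ, x ∉ V := by
    by_contra hc; push_neg at hc; exact hV (Submodule.eq_top_iff'.2 hc)
  have hπx : V.mkQ x ≠ 0 := by
    simpa [Submodule.Quotient.mk_eq_zero] using hx
  obtain ⟨φ, hφ⟩ : ∃ φ : Module.Dual ℝ ((q → ℝ) ⧸ V), φ (V.mkQ x) ≠ 0 := by
    by_contra hc; push_neg at hc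
    exact hπx ((Module.forall_dual_apply_eq_zero_iff ℝ _).1 hc)
  set w : q → ℝ := fun j => φ (V.mkQ (Pi.single j 1)) with hw
  have key : ∀ v : q → ℝ, w ⬝ᵥ v = φ (V.mkQ v) := by
    intro v
    have hv : v = ∑ j, v j • (Pi.single j (1 : ℝ) : q → ℝ) := by
      funext i
      simp [Pi.single_apply, Finset.sum_ite_eq', mul_comm]
    calc w ⬝ᵥ v = ∑ j, v j • φ (V.mkQ (Pi.single j 1)) := by
          simp [dotProduct, hw, mul_comm, smul_eq_mul]
      _ = φ (V.mkQ (∑ j, v j • (Pi.single j (1:ℝ) : q → ℝ))) := by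
          simp [map_sum, _root_.map_smul]
      _ = φ (V.mkQ v) := by rw [← hv]
  refine ⟨w, ?_, ?_⟩
  · intro h0
    apply hφ
    rw [← key x, h0, zero_dotProduct]
  · intro v hv
    rw [key v]
    simp [Submodule.Quotient.mk_eq_zero _ |>.2 hv]

lemma cmap_mulVec {q : Type*} [Fintype q] (F : Matrix q q ℝ) (v : q → ℝ) :
    (cmap F) *ᵥ (fun i => (v i : ℂ)) = fun i => (((F *ᵥ v) i : ℝ) : ℂ) := by
  funext i
  simp [cmap, Matrix.mulVec, dotProduct]

/-- PBH test: if no nonzero complex left eigenvector of `F` annihilates `G`, the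
reachability subspace is everything. -/
lemma pbh_top {q r : Type*} [Fintype q] [DecidableEq q] [Fintype r] [DecidableEq r]
    (F : Matrix q q ℝ) (G : Matrix q r ℝ)
    (hpbh : ∀ (μ : ℂ) (η : q → ℂ), η ≠ 0 → η ᵥ* cmap F = μ • η → η ᵥ* cmap G ≠ 0) :
    (⨆ j : ℕ, LinearMap.range (F ^ j * G).mulVecLin) = ⊤ := by
  by_contra hV
  set V : Submodule ℝ (q → ℝ) := ⨆ j : ℕ, LinearMap.range (F ^ j * G).mulVecLin with hVdef
  obtain ⟨w, hw0, hwann⟩ := exists_dot_ann V hV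
  have hFV : ∀ v ∈ V, F *ᵥ v ∈ V := by
    intro v hv
    have hmap : Submodule.map F.mulVecLin V ≤ V := by
      rw [hVdef, Submodule.map_iSup]
      apply iSup_le
      intro j
      rw [← LinearMap.range_comp, ← Matrix.mulVecLin_mul]
      have : F * (F ^ j * G) = F ^ (j + 1) * G := by
        rw [pow_succ']; exact (Matrix.mul_assoc F (F^j) G).symm
      rw [this]
      exact le_iSup (fun j => LinearMap.range (F ^ j * G).mulVecLin) (j + 1)
    exact hmap ⟨v, hv, rfl⟩
  set Vc : Submodule ℂ (q → ℂ) :=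
    { carrier := { η | ∀ v ∈ V, η ⬝ᵥ (fun i => (v i : ℂ)) = 0 }
      add_mem' := by intro a b ha hb v hv; simp [add_dotProduct, ha v hv, hb v hv]
      zero_mem' := by intro v hv; simp
      smul_mem' := by intro c a ha v hv; simp [smul_dotProduct, ha v hv] } with hVc
  have hwc : (fun i => (w i : ℂ)) ∈ Vc := by
    intro v hv
    have : (fun i => (w i : ℂ)) ⬝ᵥ (fun i => (v i : ℂ)) = ((w ⬝ᵥ v : ℝ) : ℂ) := by
      simp [dotProduct]
    rw [this, hwann v hv, Complex.ofReal_zero]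
  have hVcbot : Vc ≠ ⊥ := by
    intro hbot
    apply hw0
    have : (fun i => (w i : ℂ)) = 0 := by
      rw [← Submodule.mem_bot ℂ, ← hbot]; exact hwc
    funext i
    have h3 := congrFun this i
    simpa using h3
  have : Nontrivial Vc := (Submodule.nontrivial_iff_ne_bot).2 hVcbot
  have hinv : ∀ η ∈ Vc, (cmap F).vecMulLinear η ∈ Vc := by
    intro η hη v hv
    have h1 : ((cmap F).vecMulLinear η) ⬝ᵥ (fun i => (v i : ℂ))
        = η ⬝ᵥ ((cmap F) *ᵥ fun i => (v i : ℂ)) := by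
      rw [Matrix.coe_vecMulLinear]
      exact (Matrix.dotProduct_mulVec η (cmap F) _).symm
    rw [h1, cmap_mulVec]
    exact hη (F *ᵥ v) (hFV v hv)
  set T' : Module.End ℂ Vc := ((cmap F).vecMulLinear).restrict hinv with hT'
  obtain ⟨μ, hμ⟩ := Module.End.exists_eigenvalue T'
  obtain ⟨x, hx⟩ := hμ.exists_hasEigenvector
  set η : q → ℂ := (x : q → ℂ) with hη
  have hηne : η ≠ 0 := fun h0 => hx.2 (Subtype.ext h0)
  have heig : η ᵥ* cmap F = μ • η := by
    have := hx.apply_eq_smul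
    have h2 := congrArg (Subtype.val) this
    rw [hT'] at h2
    simpa [LinearMap.restrict_apply, Matrix.coe_vecMulLinear] using h2
  apply hpbh μ η hηne heig
  funext c
  have hcol : (fun i => G i c) = (F ^ 0 * G) *ᵥ Pi.single c 1 := by
    funext i
    simp [pow_zero, one_mul, Matrix.mulVec, dotProduct, Pi.single_apply, mul_ite,
      Finset.sum_ite_eq']
  have hcolV : (fun i => G i c) ∈ V := by
    have hm : (fun i => G i c) ∈ LinearMap.range (F ^ 0 * G).mulVecLin :=
      ⟨Pi.single c 1, by rw [Matrix.mulVecLin_apply, ← hcol]⟩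
    rw [hVdef]
    exact Submodule.mem_iSup_of_mem 0 hm
  have := x.2 _ hcolV
  simpa [Matrix.vecMul, dotProduct, cmap] using this

/-- If the reachability subspace is everything, the system is controllable. -/
lemma controllable_of_top {q r : Type*} [Fintype q] [DecidableEq q] [Fintype r] [DecidableEq r]
    (F : Matrix q q ℝ) (G : Matrix q r ℝ)
    (htop : (⨆ j : ℕ, LinearMap.range (F ^ j * G).mulVecLin) = ⊤) :
    Controllable F G := by
  have hmono : Monotone (fun T => ⨆ j ∈ Finset.range T, LinearMap.range (F ^ j * G).mulVecLin) := by
    intro a b hab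
    apply iSup₂_le
    intro j hj
    exact le_iSup₂_of_le j (Finset.mem_range.2 (lt_of_lt_of_le (Finset.mem_range.1 hj) hab)) le_rfl
  set f : ℕ →o Submodule ℝ (q → ℝ) :=
    ⟨fun T => ⨆ j ∈ Finset.range T, LinearMap.range (F ^ j * G).mulVecLin, hmono⟩ with hf
  obtain ⟨T₀, hT₀⟩ := monotone_stabilizes_iff_noetherian.2 inferInstance f
  set S : ℕ := T₀ + 1 with hS
  have hfS : f S = ⊤ := by
    rw [← hT₀ S (Nat.le_succ T₀)]
    rw [← htop]
    apply le_antisymm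
    · apply iSup₂_le
      intro j _
      exact le_iSup (fun j => LinearMap.range (F ^ j * G).mulVecLin) j
    · apply iSup_le
      intro j
      have h1 : LinearMap.range (F ^ j * G).mulVecLin ≤ f (j + 1) :=
        le_iSup₂_of_le j (Finset.mem_range.2 (Nat.lt_succ_self j)) le_rfl
      have h2 : f (j + 1) ≤ f (max T₀ (j + 1)) := hmono (le_max_right _ _)
      have h3 : f (max T₀ (j + 1)) = f T₀ := (hT₀ _ (le_max_left _ _)).symm
      exact le_trans h1 (le_trans h2 (le_of_eq h3))
  have hfS' : (⨆ j : Fin S, LinearMap.range (F ^ (j : ℕ) * G).mulVecLin) = ⊤ := by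
    rw [← hfS]
    apply le_antisymm
    · apply iSup_le
      intro j
      exact le_iSup₂_of_le (j : ℕ) (Finset.mem_range.2 j.2) le_rfl
    · apply iSup₂_le
      intro j hj
      exact le_iSup_of_le ⟨j, Finset.mem_range.1 hj⟩ le_rfl
  intro x₀ xf
  set y : q → ℝ := xf - (F ^ S) *ᵥ x₀ with hy
  have hymem : y ∈ ⨆ j : Fin S, LinearMap.range (F ^ (j : ℕ) * G).mulVecLin := by
    rw [hfS']; trivial
  obtain ⟨g, hg, hgsum⟩ := (Submodule.mem_iSup_iff_exists_finsupp _ _).1 hymem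
  have hchoice : ∀ j : Fin S, ∃ u : r → ℝ, (F ^ (j : ℕ) * G) *ᵥ u = g j := by
    intro j
    obtain ⟨u, hu⟩ := hg j
    exact ⟨u, hu⟩
  choose u' hu' using hchoice
  set u : ℕ → r → ℝ := fun k => if hk : S - 1 - k < S then u' ⟨S - 1 - k, hk⟩ else 0 with hu
  set x : ℕ → q → ℝ := fun k =>
    (F ^ k) *ᵥ x₀ + ∑ j ∈ Finset.range k, ((F ^ (k - 1 - j) * G) *ᵥ u j) with hx
  refine ⟨S, u, x, ?_, ?_, ?_⟩
  · simp [hx, Matrix.one_mulVec]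
  · intro k
    have hrec : x (k + 1) = (F ^ (k + 1)) *ᵥ x₀
        + (∑ j ∈ Finset.range k, ((F ^ (k - j) * G) *ᵥ u j)) + G *ᵥ u k := by
      rw [hx]
      simp only [Finset.sum_range_succ]
      have h1 : k + 1 - 1 - k = 0 := by omega
      have h2' : ∀ j ∈ Finset.range k,
          (F ^ (k + 1 - 1 - j) * G) *ᵥ u j = (F ^ (k - j) * G) *ᵥ u j := by
        intro j _
        have : k + 1 - 1 - j = k - j := by omega
        rw [this]
      rw [Finset.sum_congr rfl h2', h1, pow_zero, Matrix.one_mul, add_assoc]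
    rw [hrec]
    have hFx : F *ᵥ x k = (F ^ (k + 1)) *ᵥ x₀
        + ∑ j ∈ Finset.range k, ((F ^ (k - j) * G) *ᵥ u j) := by
      rw [hx]
      simp only [Matrix.mulVec_add]
      congr 1
      · rw [Matrix.mulVec_mulVec, ← pow_succ']
      · rw [show (F *ᵥ ∑ j ∈ Finset.range k, ((F ^ (k - 1 - j) * G) *ᵥ u j))
              = F.mulVecLin (∑ j ∈ Finset.range k, ((F ^ (k - 1 - j) * G) *ᵥ u j)) from rfl,
            map_sum]
        apply Finset.sum_congr rfl
        intro j hj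
        have hkj : k - j = (k - 1 - j) + 1 := by have := Finset.mem_range.1 hj; omega
        rw [Matrix.mulVecLin_apply, Matrix.mulVec_mulVec, ← Matrix.mul_assoc, ← pow_succ', ← hkj]
    rw [hFx]
  · have hxS : x S = (F ^ S) *ᵥ x₀ + ∑ j ∈ Finset.range S, ((F ^ (S - 1 - j) * G) *ᵥ u j) := by
      rw [hx]
    have hsum : ∑ j ∈ Finset.range S, ((F ^ (S - 1 - j) * G) *ᵥ u j) = y := by
      have hstep : ∀ k ∈ Finset.range S,
          (F ^ (S - 1 - k) * G) *ᵥ u k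
            = (fun j => if hj : j < S then (F ^ j * G) *ᵥ u' ⟨j, hj⟩ else 0) (S - 1 - k) := by
        intro k hk
        have hk' : S - 1 - k < S := by have := Finset.mem_range.1 hk; omega
        rw [hu]
        simp only [hk', dif_pos]
      rw [Finset.sum_congr rfl hstep,
        Finset.sum_range_reflect (fun j => if hj : j < S then (F ^ j * G) *ᵥ u' ⟨j, hj⟩ else 0) S]
      have hfin : ∑ j ∈ Finset.range S,
          (fun j => if hj : j < S then (F ^ j * G) *ᵥ u' ⟨j, hj⟩ else 0) j
          = ∑ j : Fin S, g j := by
        rw [Finset.sum_range]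
        apply Finset.sum_congr rfl
        intro j _
        simp only [j.2, dif_pos, Fin.eta, hu']
      rw [hfin, ← hgsum, Finsupp.sum_fintype _ _ (fun _ => rfl)]
    rw [hxS, hsum, hy]
    abel

/-- PBH test implies controllability. -/
lemma pbh_controllable {q r : Type*} [Fintype q] [DecidableEq q] [Fintype r] [DecidableEq r]
    (F : Matrix q q ℝ) (G : Matrix q r ℝ)
    (hpbh : ∀ (μ : ℂ) (η : q → ℂ), η ≠ 0 → η ᵥ* cmap F = μ • η → η ᵥ* cmap G ≠ 0) :
    Controllable F G :=
  controllable_of_top F G (pbh_top F G hpbh)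

/-- The block column of the lifted input matrix with exponent `0` recovers `Ψ`. -/
lemma tilde_ne_zero {Q P : Type*} [Fintype Q] [DecidableEq Q] [Fintype P] (l : ℕ) (hl : 1 ≤ l)
    (Φ : Matrix Q Q ℝ) (Ψ : Matrix Q P ℝ) (ξ : Q → ℂ)
    (h : ξ ᵥ* cmap Ψ ≠ 0) :
    ξ ᵥ* cmap ((Matrix.of fun a q => ((Φ ^ (l - 1 - (q.1 : ℕ))) * Ψ) a q.2 :
      Matrix Q (Fin l × P) ℝ)) ≠ 0 := by
  intro h0
  apply h
  funext c
  have h1 := congrFun h0 (⟨l - 1, by omega⟩, c)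
  simpa [Matrix.vecMul, dotProduct, cmap, Nat.sub_self, pow_zero, Matrix.one_mul] using h1

end Auxiliary

/-- sufficient controllability condition for the two-layer drive-response
networked sampled-data system under the Slow Inter-layer multi-rate sampling pattern
(Corollary 4 in the paper). Column block `r` (for `r = 0, …, l−1`, left to right) of the
lifted input matrices is `(Φ^{K,K})^{l−1−r} Ψ^{K,K}`. -/
theorem slowInterLayer_controllable
    (N n m p l : ℕ) (hl : 1 ≤ l)
    (A1 A2 : Matrix (Fin n) (Fin n) ℝ) (B1 B2 : Matrix (Fin n) (Fin p) ℝ)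
    (C1 C2 : Matrix (Fin m) (Fin n) ℝ) (H1 H2 : Matrix (Fin n) (Fin m) ℝ)
    (W1 W2 : Matrix (Fin N) (Fin N) ℝ) (Δ1 Δ2 : Matrix (Fin N) (Fin N) ℝ)
    (hΔ1d : Δ1.IsDiag) (hΔ2d : Δ2.IsDiag)
    (hΔ1v : ∀ i, Δ1 i i = 0 ∨ Δ1 i i = 1) (hΔ2v : ∀ i, Δ2 i i = 0 ∨ Δ2 i i = 1)
    (D21 : Matrix (Fin N) (Fin N) ℝ) (P21 : Matrix (Fin n) (Fin m) ℝ)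
    (h : ℝ) (hh : 0 < h)
    (Φ11 Φ22 Φ21 : Matrix (Fin N × Fin n) (Fin N × Fin n) ℝ)
    (Ψ11 Ψ22 : Matrix (Fin N × Fin n) (Fin N × Fin p) ℝ)
    (hΦ11 : Φ11 = (1 : Matrix (Fin N) (Fin N) ℝ) ⊗ₖ matExp (h • A1)
        + W1 ⊗ₖ (intExp A1 h * H1 * C1))
    (hΦ22 : Φ22 = (1 : Matrix (Fin N) (Fin N) ℝ) ⊗ₖ matExp (h • A2)
        + W2 ⊗ₖ (intExp A2 h * H2 * C2))
    (hΦ21 : Φ21 = D21 ⊗ₖ (intExp A2 h * P21 * C1))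
    (hΨ11 : Ψ11 = Δ1 ⊗ₖ (intExp A1 h * B1))
    (hΨ22 : Ψ22 = Δ2 ⊗ₖ (intExp A2 h * B2))
    -- lifted matrices
    (Φt21 : Matrix (Fin N × Fin n) (Fin N × Fin n) ℝ)
    (hΦt21 : Φt21 = (∑ r ∈ Finset.range l, Φ22 ^ r) * Φ21)
    (Ψt11 Ψt22 : Matrix (Fin N × Fin n) (Fin l × (Fin N × Fin p)) ℝ)
    (hΨt11 : Ψt11 = Matrix.of fun a q => ((Φ11 ^ (l - 1 - (q.1 : ℕ))) * Ψ11) a q.2)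
    (hΨt22 : Ψt22 = Matrix.of fun a q => ((Φ22 ^ (l - 1 - (q.1 : ℕ))) * Ψ22) a q.2)
    -- condition (1)
    (cond1 : ∀ (μ : ℂ) (η : Fin N × Fin n → ℂ), η ≠ 0 →
      η ᵥ* cmap (Φ11 ^ l) = μ • η → η ᵥ* cmap Ψ11 ≠ 0)
    -- condition (2)
    (cond2 : ∀ (μ : ℂ) (η ξ : Fin N × Fin n → ℂ), η ≠ 0 →
      η ᵥ* cmap (Φ22 ^ l) = μ • η →
      ξ ᵥ* (μ • (1 : Matrix (Fin N × Fin n) (Fin N × Fin n) ℂ) - cmap (Φ11 ^ l))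
        = η ᵥ* cmap Φt21 →
      Sum.elim (ξ ᵥ* cmap Ψt11) (η ᵥ* cmap Ψ22) ≠ 0) :
    Controllable (Matrix.fromBlocks (Φ11 ^ l) 0 Φt21 (Φ22 ^ l))
      (Matrix.fromBlocks Ψt11 0 0 Ψt22) := by
  apply pbh_controllable
  intro μ z hz heig
  set ξ : Fin N × Fin n → ℂ := z ∘ Sum.inl with hξ
  set η : Fin N × Fin n → ℂ := z ∘ Sum.inr with hη
  have hcm : cmap (Matrix.fromBlocks (Φ11 ^ l) 0 Φt21 (Φ22 ^ l))
      = Matrix.fromBlocks (cmap (Φ11 ^ l)) 0 (cmap Φt21) (cmap (Φ22 ^ l)) := by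
    simp only [cmap, Matrix.fromBlocks_map, Matrix.map_zero _ Complex.ofReal_zero]
  have hcmG : cmap (Matrix.fromBlocks Ψt11 0 0 Ψt22)
      = Matrix.fromBlocks (cmap Ψt11) 0 0 (cmap Ψt22) := by
    simp only [cmap, Matrix.fromBlocks_map, Matrix.map_zero _ Complex.ofReal_zero]
  rw [hcm, Matrix.vecMul_fromBlocks] at heig
  have e1 : ξ ᵥ* cmap (Φ11 ^ l) + η ᵥ* cmap Φt21 = μ • ξ := by
    funext c; exact congrFun heig (Sum.inl c)
  have e2 : η ᵥ* cmap (Φ22 ^ l) = μ • η := by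
    funext c
    have h2 := congrFun heig (Sum.inr c)
    simpa [Matrix.vecMul_zero, hη] using h2
  have gL : z ᵥ* cmap (Matrix.fromBlocks Ψt11 0 0 Ψt22)
      = Sum.elim (ξ ᵥ* cmap Ψt11) (η ᵥ* cmap Ψt22) := by
    rw [hcmG, Matrix.vecMul_fromBlocks]
    funext i
    cases i <;> simp [Matrix.vecMul_zero, hξ, hη]
  rw [gL]
  by_cases hη0 : η = 0
  · -- drive layer alone
    have hξ0 : ξ ≠ 0 := by
      intro hc
      apply hz
      funext i
      cases i with
      | inl a => exact congrFun hc a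
      | inr a => exact congrFun hη0 a
    have e1' : ξ ᵥ* cmap (Φ11 ^ l) = μ • ξ := by
      rw [← e1, hη0, Matrix.zero_vecMul, add_zero]
    have hΨ : ξ ᵥ* cmap Ψ11 ≠ 0 := cond1 μ ξ hξ0 e1'
    have hΨt : ξ ᵥ* cmap Ψt11 ≠ 0 := by
      rw [hΨt11]
      exact tilde_ne_zero l hl Φ11 Ψ11 ξ hΨ
    intro h0
    apply hΨt
    funext d
    exact congrFun h0 (Sum.inl d)
  · -- response layer present
    have e3 : ξ ᵥ* (μ • (1 : Matrix (Fin N × Fin n) (Fin N × Fin n) ℂ) - cmap (Φ11 ^ l))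
        = η ᵥ* cmap Φt21 := by
      rw [Matrix.vecMul_sub]
      have hone : ξ ᵥ* (μ • (1 : Matrix (Fin N × Fin n) (Fin N × Fin n) ℂ)) = μ • ξ := by
        funext c
        simp [Matrix.vecMul, dotProduct, Matrix.smul_apply, Matrix.one_apply, mul_ite,
          Finset.sum_ite_eq', mul_comm]
      rw [hone, ← e1]
      abel
    have hsum := cond2 μ η ξ hη0 e2 e3
    by_cases hξΨ : ξ ᵥ* cmap Ψt11 = 0
    · have hηΨ : η ᵥ* cmap Ψ22 ≠ 0 := by
        intro hc
        apply hsum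
        funext i
        cases i with
        | inl a => exact congrFun hξΨ a
        | inr a => exact congrFun hc a
      have hΨt : η ᵥ* cmap Ψt22 ≠ 0 := by
        rw [hΨt22]
        exact tilde_ne_zero l hl Φ22 Ψ22 η hηΨ
      intro h0
      apply hΨt
      funext d
      exact congrFun h0 (Sum.inr d)
    · intro h0
      apply hξΨ
      funext d
      exact congrFun h0 (Sum.inl d)
end
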